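/- arXiv:1802.08675 — 2 statements merged into one kernel-verified Lean document; each statement's English description precedes it below -/
import Mathlib

section
/- For 0 < κ < 1 and a > 0, the Laplace transform φ̂(λ) of φ(r) = κ a^κ / (a+r)^{κ+1} satisfies φ̂(λ) = 1 - Γ(1-κ) a^κ λ^κ + o(λ^κ) as λ → 0⁺ (equivalently, (1 - φ̂(λ))/ (aλ)^κ → Γ(1-κ)). -/
open Real MeasureTheory Set Filter

lemma aux_key (κ a lam : ℝ) (hκ : 0 < κ) (hκ1 : κ < 1) (ha : 0 < a) (hlam : 0 < lam)
    (φ : ℝ → ℝ) (hφ : ∀ r, φ r = κ * a ^ κ / (a + r) ^ (κ + 1)) :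
    1 - (∫ r in Ioi (0:ℝ), Real.exp (-(lam * r)) * φ r)
      = (a * lam) ^ κ * ∫ u in Ioi (0:ℝ), Real.exp (-u) * (a * lam + u) ^ (-κ) := by
  -- rewrite φ with rpow
  have hφ' : ∀ r : ℝ, 0 < a + r → φ r = κ * a ^ κ * (a + r) ^ (-(κ + 1)) := by
    intro r har
    rw [hφ r, Real.rpow_neg har.le, div_eq_mul_inv]
  -- integrability of E := exp * a^κ (a+r)^{-κ}
  have hmeasE : Measurable fun r : ℝ => Real.exp (-(lam * r)) * (a ^ κ * (a + r) ^ (-κ)) := by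
    fun_prop
  have hE : IntegrableOn (fun r : ℝ => Real.exp (-(lam * r)) * (a ^ κ * (a + r) ^ (-κ))) (Ioi 0) := by
    refine Integrable.mono' ((exp_neg_integrableOn_Ioi 0 hlam)) hmeasE.aestronglyMeasurable ?_
    filter_upwards [ae_restrict_mem measurableSet_Ioi] with r hr
    simp only [mem_Ioi] at hr
    have har : (0:ℝ) < a + r := by linarith
    have h1 : (a + r) ^ (-κ) ≤ a ^ (-κ) :=
      Real.rpow_le_rpow_of_nonpos ha (by linarith) (by linarith)
    have h2 : a ^ κ * (a + r) ^ (-κ) ≤ 1 := by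
      calc a ^ κ * (a + r) ^ (-κ) ≤ a ^ κ * a ^ (-κ) :=
            mul_le_mul_of_nonneg_left h1 (rpow_nonneg ha.le κ)
        _ = 1 := by rw [← Real.rpow_add ha]; simp
    rw [Real.norm_eq_abs, abs_of_nonneg (by positivity)]
    calc Real.exp (-(lam * r)) * (a ^ κ * (a + r) ^ (-κ)) ≤ Real.exp (-(lam * r)) * 1 :=
          mul_le_mul_of_nonneg_left h2 (exp_pos _).le
      _ = Real.exp (-lam * r) := by rw [mul_one, neg_mul]
  -- integrability of exp * φ
  have hmeasJ : Measurable fun r : ℝ => Real.exp (-(lam * r)) * φ r := by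
    have : (fun r : ℝ => φ r) = fun r => κ * a ^ κ / (a + r) ^ (κ + 1) := funext hφ
    rw [show (fun r : ℝ => Real.exp (-(lam * r)) * φ r)
        = fun r => Real.exp (-(lam * r)) * (κ * a ^ κ / (a + r) ^ (κ + 1)) by
      funext r; rw [hφ r]]
    fun_prop
  have hJ : IntegrableOn (fun r : ℝ => Real.exp (-(lam * r)) * φ r) (Ioi 0) := by
    have hint : Integrable (fun r : ℝ => (κ * a ^ κ * a ^ (-(κ+1))) * Real.exp (-lam * r))
        (volume.restrict (Ioi 0)) := (exp_neg_integrableOn_Ioi 0 hlam).const_mul _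
    refine Integrable.mono' hint hmeasJ.aestronglyMeasurable ?_
    filter_upwards [ae_restrict_mem measurableSet_Ioi] with r hr
    simp only [mem_Ioi] at hr
    have har : (0:ℝ) < a + r := by linarith
    rw [hφ' r har, Real.norm_eq_abs, abs_of_nonneg (by positivity)]
    have h1 : (a + r) ^ (-(κ+1)) ≤ a ^ (-(κ+1)) :=
      Real.rpow_le_rpow_of_nonpos ha (by linarith) (by linarith)
    calc Real.exp (-(lam * r)) * (κ * a ^ κ * (a + r) ^ (-(κ+1)))
        ≤ Real.exp (-(lam * r)) * (κ * a ^ κ * a ^ (-(κ+1))) := by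
          apply mul_le_mul_of_nonneg_left _ (exp_pos _).le
          exact mul_le_mul_of_nonneg_left h1 (by positivity)
      _ = κ * a ^ κ * a ^ (-(κ+1)) * Real.exp (-lam * r) := by rw [neg_mul]; ring
  -- IBP
  set f : ℝ → ℝ := fun r => -(Real.exp (-(lam * r)) * (a ^ κ * (a + r) ^ (-κ))) with hf
  have hderiv : ∀ r ∈ Ioi (0:ℝ), HasDerivAt f
      (lam * (Real.exp (-(lam * r)) * (a ^ κ * (a + r) ^ (-κ)))
        + Real.exp (-(lam * r)) * φ r) r := by
    intro r hr
    simp only [mem_Ioi] at hr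
    have har : (0:ℝ) < a + r := by linarith
    rw [hφ' r har]
    have h1 : HasDerivAt (fun r : ℝ => Real.exp (-(lam * r))) (Real.exp (-(lam * r)) * (-lam)) r := by
      have := (((hasDerivAt_id r).const_mul lam).neg).exp
      simpa using this
    have h2 : HasDerivAt (fun r : ℝ => (a + r) ^ (-κ)) ((-κ) * (a + r) ^ (-κ - 1) * 1) r :=
      (Real.hasDerivAt_rpow_const (Or.inl har.ne')).comp r ((hasDerivAt_id r).const_add a)
    have h3 := ((h1.mul (h2.const_mul (a ^ κ))).neg)
    refine HasDerivAt.congr_deriv h3 ?_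
    have : (a + r) ^ (-(κ + 1)) = (a + r) ^ (-κ - 1) := by ring_nf
    rw [this]; ring
  have hcont : ContinuousWithinAt f (Ici 0) 0 := by
    apply ContinuousAt.continuousWithinAt
    have h2 : ContinuousAt (fun r : ℝ => (a + r) ^ (-κ)) 0 := by
      apply ContinuousAt.rpow_const (by fun_prop)
      left; simpa using ha.ne'
    have h1 : ContinuousAt (fun r : ℝ => Real.exp (-(lam * r))) 0 := by fun_prop
    exact (h1.mul (continuousAt_const.mul h2)).neg
  have hlim : Tendsto f atTop (nhds 0) := by
    have h1 : Tendsto (fun r : ℝ => lam * r) atTop atTop :=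
      Tendsto.const_mul_atTop hlam tendsto_id
    have hten : Tendsto (fun r : ℝ => Real.exp (-(lam * r))) atTop (nhds 0) :=
      Real.tendsto_exp_atBot.comp (tendsto_neg_atTop_atBot.comp h1)
    refine squeeze_zero_norm' ?_ hten
    filter_upwards [eventually_ge_atTop (0:ℝ)] with r hr
    have har : (0:ℝ) < a + r := by linarith
    have h1 : (a + r) ^ (-κ) ≤ a ^ (-κ) :=
      Real.rpow_le_rpow_of_nonpos ha (by linarith) (by linarith)
    have h2 : a ^ κ * (a + r) ^ (-κ) ≤ 1 := by
      calc a ^ κ * (a + r) ^ (-κ) ≤ a ^ κ * a ^ (-κ) :=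
            mul_le_mul_of_nonneg_left h1 (rpow_nonneg ha.le κ)
        _ = 1 := by rw [← Real.rpow_add ha]; simp
    rw [hf]
    simp only [norm_neg, Real.norm_eq_abs]
    rw [abs_of_nonneg (by positivity)]
    calc Real.exp (-(lam * r)) * (a ^ κ * (a + r) ^ (-κ)) ≤ Real.exp (-(lam * r)) * 1 :=
          mul_le_mul_of_nonneg_left h2 (exp_pos _).le
      _ = Real.exp (-(lam * r)) := mul_one _
  have hf0 : f 0 = -1 := by
    rw [hf]
    simp only [mul_zero, neg_zero, Real.exp_zero, add_zero, one_mul]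
    rw [← Real.rpow_add ha]
    simp
  have hfint : IntegrableOn (fun r => lam * (Real.exp (-(lam * r)) * (a ^ κ * (a + r) ^ (-κ)))
      + Real.exp (-(lam * r)) * φ r) (Ioi 0) := (hE.const_mul lam).add hJ
  have hIBP := integral_Ioi_of_hasDerivAt_of_tendsto hcont hderiv hfint hlim
  rw [hf0, sub_neg_eq_add, zero_add] at hIBP
  rw [integral_add (hE.const_mul lam) hJ, integral_const_mul] at hIBP
  -- hIBP : lam * ∫ E + φhat = 1
  have hsub := integral_comp_mul_left_Ioi
    (fun u => Real.exp (-u) * (a * lam + u) ^ (-κ)) 0 hlam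
  simp only [mul_zero, smul_eq_mul] at hsub
  have hcong : ∀ r ∈ Ioi (0:ℝ),
      Real.exp (-(lam * r)) * (a * lam + lam * r) ^ (-κ)
        = lam ^ (-κ) * (Real.exp (-(lam * r)) * (a + r) ^ (-κ)) := by
    intro r hr
    simp only [mem_Ioi] at hr
    have : a * lam + lam * r = lam * (a + r) := by ring
    rw [this, Real.mul_rpow hlam.le (by linarith)]
    ring
  rw [setIntegral_congr_fun measurableSet_Ioi (fun r hr => hcong r hr)] at hsub
  rw [integral_const_mul] at hsub
  have hEsplit : (∫ r in Ioi (0:ℝ), Real.exp (-(lam * r)) * (a ^ κ * (a + r) ^ (-κ)))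
      = a ^ κ * ∫ r in Ioi (0:ℝ), Real.exp (-(lam * r)) * (a + r) ^ (-κ) := by
    rw [← integral_const_mul]
    congr 1; funext r; ring
  rw [hEsplit] at hIBP
  set I' := ∫ r in Ioi (0:ℝ), Real.exp (-(lam * r)) * (a + r) ^ (-κ) with hI'
  set G := ∫ u in Ioi (0:ℝ), Real.exp (-u) * (a * lam + u) ^ (-κ) with hGdef
  have hG : G = lam ^ (1 - κ) * I' := by
    have h4 : G = lam * (lam ^ (-κ) * I') := by
      rw [hsub, ← mul_assoc, mul_inv_cancel₀ hlam.ne', one_mul]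
    have h5 : lam * lam ^ (-κ) = lam ^ (1 - κ) := by
      rw [show (1:ℝ) - κ = 1 + -κ by ring, Real.rpow_add hlam, Real.rpow_one]
    rw [h4, ← mul_assoc, h5]
  have h6 : lam ^ κ * lam ^ (1 - κ) = lam := by
    rw [← Real.rpow_add hlam]; simp
  rw [Real.mul_rpow ha.le hlam.le, hG]
  have h7 : 1 - (∫ r in Ioi (0:ℝ), Real.exp (-(lam * r)) * φ r) = lam * (a ^ κ * I') := by
    linarith [hIBP]
  rw [h7]
  linear_combination (a ^ κ * I') * h6.symm

lemma aux_lim (κ a : ℝ) (hκ : 0 < κ) (hκ1 : κ < 1) (ha : 0 < a) :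
    Tendsto (fun lam : ℝ => ∫ u in Ioi (0:ℝ), Real.exp (-u) * (a * lam + u) ^ (-κ))
      (nhdsWithin 0 (Ioi 0)) (nhds (Real.Gamma (1 - κ))) := by
  have hΓ : Real.Gamma (1 - κ) = ∫ u in Ioi (0:ℝ), Real.exp (-u) * u ^ (-κ) := by
    rw [Real.Gamma_eq_integral (by linarith)]
    congr 1; funext u; rw [show (1:ℝ) - κ - 1 = -κ by ring]
  rw [hΓ]
  have hbound : IntegrableOn (fun u : ℝ => Real.exp (-u) * u ^ (-κ)) (Ioi 0) := by
    have := Real.GammaIntegral_convergent (s := 1 - κ) (by linarith)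
    simpa [show (1:ℝ) - κ - 1 = -κ by ring] using this
  refine tendsto_integral_filter_of_dominated_convergence
    (fun u => Real.exp (-u) * u ^ (-κ)) ?_ ?_ hbound ?_
  · filter_upwards [self_mem_nhdsWithin] with lam hlam
    have : Measurable fun u : ℝ => Real.exp (-u) * (a * lam + u) ^ (-κ) := by fun_prop
    exact this.aestronglyMeasurable
  · filter_upwards [self_mem_nhdsWithin] with lam hlam
    simp only [mem_Ioi] at hlam
    filter_upwards [ae_restrict_mem measurableSet_Ioi] with u hu
    simp only [mem_Ioi] at hu
    have h1 : (0:ℝ) < a * lam + u := by positivity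
    rw [Real.norm_eq_abs, abs_of_nonneg (by positivity)]
    apply mul_le_mul_of_nonneg_left _ (exp_pos _).le
    exact Real.rpow_le_rpow_of_nonpos hu (by nlinarith) (by linarith)
  · filter_upwards [ae_restrict_mem measurableSet_Ioi] with u hu
    simp only [mem_Ioi] at hu
    have hca : ContinuousAt (fun lam : ℝ => Real.exp (-u) * (a * lam + u) ^ (-κ)) 0 := by
      apply ContinuousAt.mul continuousAt_const
      apply ContinuousAt.rpow_const (by fun_prop)
      left; simpa using hu.ne'
    have := hca.tendsto.mono_left (nhdsWithin_le_nhds (s := Ioi (0:ℝ)))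
    simpa using this

theorem laplace_transform_small_lambda_expansion (κ a : ℝ) (hκ : 0 < κ) (hκ1 : κ < 1)
    (ha : 0 < a) (φ : ℝ → ℝ) (hφ : ∀ r, φ r = κ * a ^ κ / (a + r) ^ (κ + 1))
    (φhat : ℝ → ℝ) (hφhat : ∀ lam, φhat lam = ∫ r in Ioi (0:ℝ), Real.exp (-(lam * r)) * φ r) :
    Tendsto (fun lam : ℝ => (1 - φhat lam) / (a * lam) ^ κ)
      (nhdsWithin 0 (Ioi 0)) (nhds (Real.Gamma (1 - κ))) := by
  refine Tendsto.congr' ?_ (aux_lim κ a hκ hκ1 ha)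
  filter_upwards [self_mem_nhdsWithin] with lam hlam
  simp only [mem_Ioi] at hlam
  rw [hφhat, aux_key κ a lam hκ hκ1 ha hlam φ hφ]
  rw [mul_div_cancel_left₀]
  exact (Real.rpow_pos_of_pos (by positivity) κ).ne'
end

section
/- If ℓ : [0,2] → ℝ is a nonnegative continuous probability density on the sphere (∫_S ℓ(|θ-e₁|) dθ = 1), then each coordinate function φ₁ʲ(θ) = n θⱼ/|S| is an eigenfunction of T with eigenvalue ν₁ = ∫_S ℓ(|η - e₁|) η₁ dη, and |ν₁| < 1 provided ℓ is not concentrated at a point. -/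
open MeasureTheory Metric
open scoped Pointwise

noncomputable def sphereMeasure (n : ℕ) :
    Measure (sphere (0 : EuclideanSpace ℝ (Fin n)) 1) :=
  (volume : Measure (EuclideanSpace ℝ (Fin n))).toSphere

namespace CoordEigen

lemma norm_coe_sphere {n : ℕ} (θ : sphere (0 : EuclideanSpace ℝ (Fin n)) 1) :
    ‖(θ : EuclideanSpace ℝ (Fin n))‖ = 1 := by
  have := θ.2; rwa [mem_sphere_zero_iff_norm] at this

noncomputable def sMap {n : ℕ} (e : EuclideanSpace ℝ (Fin n) ≃ₗᵢ[ℝ] EuclideanSpace ℝ (Fin n)) :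
    sphere (0 : EuclideanSpace ℝ (Fin n)) 1 ≃ₜ sphere (0 : EuclideanSpace ℝ (Fin n)) 1 where
  toEquiv :=
  { toFun := fun θ => ⟨e θ, by
      rw [mem_sphere_zero_iff_norm, e.norm_map, ← mem_sphere_zero_iff_norm]; exact θ.2⟩
    invFun := fun θ => ⟨e.symm θ, by
      rw [mem_sphere_zero_iff_norm, e.symm.norm_map, ← mem_sphere_zero_iff_norm]; exact θ.2⟩
    left_inv := fun θ => Subtype.ext (e.symm_apply_apply θ)
    right_inv := fun θ => Subtype.ext (e.apply_symm_apply θ) }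
  continuous_toFun := by exact (e.continuous.comp continuous_subtype_val).subtype_mk _
  continuous_invFun := by exact (e.symm.continuous.comp continuous_subtype_val).subtype_mk _

@[simp] lemma sMap_coe {n : ℕ} (e : EuclideanSpace ℝ (Fin n) ≃ₗᵢ[ℝ] EuclideanSpace ℝ (Fin n))
    (θ : sphere (0 : EuclideanSpace ℝ (Fin n)) 1) :
    ((sMap e θ : sphere (0 : EuclideanSpace ℝ (Fin n)) 1) : EuclideanSpace ℝ (Fin n)) = e θ := rfl

lemma map_sMap {n : ℕ} (e : EuclideanSpace ℝ (Fin n) ≃ₗᵢ[ℝ] EuclideanSpace ℝ (Fin n)) :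
    Measure.map (sMap e) (sphereMeasure n) = sphereMeasure n := by
  unfold sphereMeasure
  ext s hs
  rw [Measure.map_apply (sMap e).continuous.measurable hs,
      Measure.toSphere_apply' _ ((sMap e).continuous.measurable hs),
      Measure.toSphere_apply' _ hs]
  congr 1
  have h1 : (Subtype.val '' ((sMap e) ⁻¹' s) : Set (EuclideanSpace ℝ (Fin n)))
      = ⇑e ⁻¹' (Subtype.val '' s) := by
    ext x
    constructor
    · rintro ⟨θ, hθ, rfl⟩
      exact ⟨sMap e θ, hθ, rfl⟩
    · rintro ⟨z, hz, hzx⟩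
      have hx1 : x ∈ sphere (0 : EuclideanSpace ℝ (Fin n)) 1 := by
        rw [mem_sphere_zero_iff_norm, ← e.norm_map x, ← hzx]
        exact norm_coe_sphere z
      refine ⟨⟨x, hx1⟩, ?_, rfl⟩
      have : sMap e ⟨x, hx1⟩ = z := Subtype.ext hzx.symm
      rw [Set.mem_preimage, this]; exact hz
  rw [h1]
  have h2 : Set.Ioo (0:ℝ) 1 • (⇑e ⁻¹' (Subtype.val '' s))
      = ⇑e ⁻¹' (Set.Ioo (0:ℝ) 1 • (Subtype.val '' s)) := by
    ext x
    simp only [Set.mem_smul, Set.mem_preimage]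
    constructor
    · rintro ⟨c, hc, y, hy, rfl⟩
      exact ⟨c, hc, e y, hy, (e.map_smul c y).symm⟩
    · rintro ⟨c, hc, y, hy, hxy⟩
      refine ⟨c, hc, e.symm y, by simpa using hy, ?_⟩
      apply e.injective
      rw [e.map_smul, e.apply_symm_apply, hxy]
  rw [h2]
  exact e.measurePreserving.measure_preimage_emb e.toHomeomorph.measurableEmbedding _

lemma integral_sMap {n : ℕ} (e : EuclideanSpace ℝ (Fin n) ≃ₗᵢ[ℝ] EuclideanSpace ℝ (Fin n))
    (g : sphere (0 : EuclideanSpace ℝ (Fin n)) 1 → ℝ) :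
    ∫ θ, g (sMap e θ) ∂(sphereMeasure n) = ∫ θ, g θ ∂(sphereMeasure n) :=
  MeasurePreserving.integral_comp ⟨(sMap e).continuous.measurable, map_sMap e⟩
    (sMap e).measurableEmbedding g

instance {n : ℕ} : IsFiniteMeasure (sphereMeasure n) := by
  unfold sphereMeasure; infer_instance

lemma integrable_cont {n : ℕ} {g : sphere (0 : EuclideanSpace ℝ (Fin n)) 1 → ℝ}
    (hg : Continuous g) :
    Integrable g (sphereMeasure n) :=
  integrableOn_univ.mp (hg.continuousOn.integrableOn_compact isCompact_univ)

lemma norm_sub_mem_Icc {n : ℕ} (v : EuclideanSpace ℝ (Fin n)) (hv : ‖v‖ = 1)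
    (θ : sphere (0 : EuclideanSpace ℝ (Fin n)) 1) :
    ‖v - (θ : EuclideanSpace ℝ (Fin n))‖ ∈ Set.Icc (0:ℝ) 2 := by
  refine ⟨norm_nonneg _, ?_⟩
  calc ‖v - (θ : EuclideanSpace ℝ (Fin n))‖ ≤ ‖v‖ + ‖(θ : EuclideanSpace ℝ (Fin n))‖ :=
        norm_sub_le _ _
    _ = 2 := by rw [hv, norm_coe_sphere]; norm_num

lemma cont_ell {n : ℕ} {ℓ : ℝ → ℝ} (hℓ : ContinuousOn ℓ (Set.Icc 0 2))
    (v : EuclideanSpace ℝ (Fin n)) (hv : ‖v‖ = 1) :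
    Continuous (fun θ : sphere (0 : EuclideanSpace ℝ (Fin n)) 1 =>
      ℓ ‖v - (θ : EuclideanSpace ℝ (Fin n))‖) :=
  hℓ.comp_continuous ((continuous_const.sub continuous_subtype_val).norm)
    (fun θ => norm_sub_mem_Icc v hv θ)

lemma cont_coord {n : ℕ} (k : Fin n) :
    Continuous (fun θ : sphere (0 : EuclideanSpace ℝ (Fin n)) 1 =>
      (θ : EuclideanSpace ℝ (Fin n)) k) :=
  (EuclideanSpace.proj (𝕜 := ℝ) k).continuous.comp continuous_subtype_val

end CoordEigen

open scoped RealInnerProductSpace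

open CoordEigen in
theorem coordinates_are_eigenfunctions (n : ℕ) (hn : 1 ≤ n)
    (ℓ : ℝ → ℝ) (hℓ : ContinuousOn ℓ (Set.Icc 0 2)) (hℓ0 : ∀ s ∈ Set.Icc (0:ℝ) 2, 0 ≤ ℓ s)
    (e₁ : EuclideanSpace ℝ (Fin n)) (he₁ : e₁ = EuclideanSpace.single ⟨0, hn⟩ 1)
    (absS : ℝ) (habsS : absS = ((sphereMeasure n) Set.univ).toReal)
    (hnorm : ∫ θ, ℓ ‖(θ : EuclideanSpace ℝ (Fin n)) - e₁‖ ∂(sphereMeasure n) = 1)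
    (ν₁ : ℝ)
    (hν₁ : ν₁ = ∫ η, ℓ ‖(η : EuclideanSpace ℝ (Fin n)) - e₁‖ *
        (η : EuclideanSpace ℝ (Fin n)) ⟨0, hn⟩ ∂(sphereMeasure n)) :
    (∀ j : Fin n, ∀ η : sphere (0 : EuclideanSpace ℝ (Fin n)) 1,
      (∫ θ, ℓ ‖(η : EuclideanSpace ℝ (Fin n)) - (θ : EuclideanSpace ℝ (Fin n))‖ *
          (n * (θ : EuclideanSpace ℝ (Fin n)) j / absS) ∂(sphereMeasure n)) =
        ν₁ * (n * (η : EuclideanSpace ℝ (Fin n)) j / absS)) ∧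
    ((¬ ∃ p : sphere (0 : EuclideanSpace ℝ (Fin n)) 1,
        ∀ᵐ (θ : sphere (0 : EuclideanSpace ℝ (Fin n)) 1) ∂(sphereMeasure n),
          ℓ ‖(θ : EuclideanSpace ℝ (Fin n)) - e₁‖ ≠ 0 → θ = p) →
      |ν₁| < 1) := by
  set i0 : Fin n := ⟨0, hn⟩ with hi0
  set μ := sphereMeasure n with hμ
  have he₁norm : ‖e₁‖ = 1 := by rw [he₁, EuclideanSpace.norm_single]; norm_num
  have contB : ∀ v : EuclideanSpace ℝ (Fin n), ‖v‖ = 1 →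
      Continuous (fun θ : sphere (0 : EuclideanSpace ℝ (Fin n)) 1 =>
        ℓ ‖(θ : EuclideanSpace ℝ (Fin n)) - v‖) := by
    intro v hv
    have : (fun θ : sphere (0 : EuclideanSpace ℝ (Fin n)) 1 =>
        ℓ ‖(θ : EuclideanSpace ℝ (Fin n)) - v‖)
        = (fun θ : sphere (0 : EuclideanSpace ℝ (Fin n)) 1 =>
            ℓ ‖v - (θ : EuclideanSpace ℝ (Fin n))‖) := by
      funext θ; rw [norm_sub_rev]
    rw [this]; exact cont_ell hℓ v hv
  have hInt_fk : ∀ k : Fin n,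
      Integrable (fun θ : sphere (0 : EuclideanSpace ℝ (Fin n)) 1 =>
        ℓ ‖(θ : EuclideanSpace ℝ (Fin n)) - e₁‖ * (θ : EuclideanSpace ℝ (Fin n)) k) μ := by
    intro k
    exact integrable_cont ((contB e₁ he₁norm).mul (cont_coord k))
  have hInt_f : Integrable (fun θ : sphere (0 : EuclideanSpace ℝ (Fin n)) 1 =>
      ℓ ‖(θ : EuclideanSpace ℝ (Fin n)) - e₁‖) μ :=
    integrable_cont (contB e₁ he₁norm)
  -- vanishing of off-axis moments
  have hJ : ∀ k : Fin n, k ≠ i0 →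
      (∫ θ, ℓ ‖(θ : EuclideanSpace ℝ (Fin n)) - e₁‖ *
        (θ : EuclideanSpace ℝ (Fin n)) k ∂μ) = 0 := by
    intro k hk
    set s : EuclideanSpace ℝ (Fin n) ≃ₗᵢ[ℝ] EuclideanSpace ℝ (Fin n) :=
      LinearIsometryEquiv.piLpCongrRight 2
        (fun i => if i = k then LinearIsometryEquiv.neg ℝ else LinearIsometryEquiv.refl ℝ ℝ)
      with hs_def
    have hs_apply : ∀ (x : EuclideanSpace ℝ (Fin n)) (m : Fin n),
        s x m = if m = k then -x m else x m := by
      intro x m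
      rw [hs_def, LinearIsometryEquiv.piLpCongrRight_apply, PiLp.toLp_apply]
      split <;> simp_all
    have hse : s e₁ = e₁ := by
      refine PiLp.ext fun m => ?_
      rw [hs_apply]
      by_cases h : m = k
      · rw [if_pos h, he₁]
        have h0 : (EuclideanSpace.single i0 (1:ℝ)) m = 0 := by
          rw [EuclideanSpace.single_apply, if_neg (by rw [h]; exact hk)]
        rw [h0, neg_zero]
      · rw [if_neg h]
    have hnrm : ∀ θ : sphere (0 : EuclideanSpace ℝ (Fin n)) 1,
        ‖s (θ : EuclideanSpace ℝ (Fin n)) - e₁‖ = ‖(θ : EuclideanSpace ℝ (Fin n)) - e₁‖ := by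
      intro θ
      conv_lhs => rw [← hse]
      rw [← map_sub, s.norm_map]
    have hchg := integral_sMap s (fun θ : sphere (0 : EuclideanSpace ℝ (Fin n)) 1 =>
      ℓ ‖(θ : EuclideanSpace ℝ (Fin n)) - e₁‖ * (θ : EuclideanSpace ℝ (Fin n)) k)
    have hneg : (fun θ : sphere (0 : EuclideanSpace ℝ (Fin n)) 1 =>
        ℓ ‖((sMap s θ : sphere (0 : EuclideanSpace ℝ (Fin n)) 1) :
            EuclideanSpace ℝ (Fin n)) - e₁‖ *
          ((sMap s θ : sphere (0 : EuclideanSpace ℝ (Fin n)) 1) : EuclideanSpace ℝ (Fin n)) k)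
        = (fun θ : sphere (0 : EuclideanSpace ℝ (Fin n)) 1 =>
            -(ℓ ‖(θ : EuclideanSpace ℝ (Fin n)) - e₁‖ * (θ : EuclideanSpace ℝ (Fin n)) k)) := by
      funext θ
      rw [sMap_coe, hnrm θ, hs_apply, if_pos rfl]
      ring
    rw [hneg, integral_neg] at hchg
    linarith
  -- eigenfunction identity without normalization
  have key : ∀ (j : Fin n) (η : sphere (0 : EuclideanSpace ℝ (Fin n)) 1),
      (∫ θ, ℓ ‖(η : EuclideanSpace ℝ (Fin n)) - (θ : EuclideanSpace ℝ (Fin n))‖ *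
        (θ : EuclideanSpace ℝ (Fin n)) j ∂μ) = ν₁ * (η : EuclideanSpace ℝ (Fin n)) j := by
    intro j η
    set e : EuclideanSpace ℝ (Fin n) ≃ₗᵢ[ℝ] EuclideanSpace ℝ (Fin n) :=
      Submodule.reflection (ℝ ∙ (e₁ - (η : EuclideanSpace ℝ (Fin n))))ᗮ with he_def
    have hee : e e₁ = (η : EuclideanSpace ℝ (Fin n)) := by
      rw [he_def]
      exact Submodule.reflection_sub (by rw [he₁norm, norm_coe_sphere])
    set w : EuclideanSpace ℝ (Fin n) := e.symm (EuclideanSpace.single j 1) with hw_def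
    have hinner_w : ∀ x : EuclideanSpace ℝ (Fin n), ⟪x, w⟫ = (e x) j := by
      intro x
      have h1 : (e x) j = ⟪e x, EuclideanSpace.single j (1:ℝ)⟫ := by
        rw [EuclideanSpace.inner_single_right]; simp
      rw [h1, hw_def, ← e.inner_map_map x (e.symm (EuclideanSpace.single j 1)),
        e.apply_symm_apply]
    have hw0 : w i0 = (η : EuclideanSpace ℝ (Fin n)) j := by
      have h1 : w i0 = ⟪EuclideanSpace.single i0 (1:ℝ), w⟫ := by
        rw [EuclideanSpace.inner_single_left]; simp
      rw [h1, ← he₁, hinner_w, hee]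
    have hcoord : ∀ θ : sphere (0 : EuclideanSpace ℝ (Fin n)) 1,
        (e (θ : EuclideanSpace ℝ (Fin n))) j
          = ∑ k, (θ : EuclideanSpace ℝ (Fin n)) k * w k := by
      intro θ
      rw [← hinner_w, PiLp.inner_apply]
      simp [mul_comm]
    have hnrm : ∀ θ : sphere (0 : EuclideanSpace ℝ (Fin n)) 1,
        ‖(η : EuclideanSpace ℝ (Fin n)) - e (θ : EuclideanSpace ℝ (Fin n))‖
          = ‖(θ : EuclideanSpace ℝ (Fin n)) - e₁‖ := by
      intro θ
      rw [← hee, ← map_sub, e.norm_map, norm_sub_rev]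
    have hchg := integral_sMap e (fun θ : sphere (0 : EuclideanSpace ℝ (Fin n)) 1 =>
      ℓ ‖(η : EuclideanSpace ℝ (Fin n)) - (θ : EuclideanSpace ℝ (Fin n))‖ *
        (θ : EuclideanSpace ℝ (Fin n)) j)
    have hexp : (fun θ : sphere (0 : EuclideanSpace ℝ (Fin n)) 1 =>
        ℓ ‖(η : EuclideanSpace ℝ (Fin n)) -
            ((sMap e θ : sphere (0 : EuclideanSpace ℝ (Fin n)) 1) :
              EuclideanSpace ℝ (Fin n))‖ *
          ((sMap e θ : sphere (0 : EuclideanSpace ℝ (Fin n)) 1) : EuclideanSpace ℝ (Fin n)) j)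
        = (fun θ : sphere (0 : EuclideanSpace ℝ (Fin n)) 1 =>
            ∑ k, (ℓ ‖(θ : EuclideanSpace ℝ (Fin n)) - e₁‖ *
              (θ : EuclideanSpace ℝ (Fin n)) k) * w k) := by
      funext θ
      rw [sMap_coe, hnrm θ, hcoord θ, Finset.mul_sum]
      exact Finset.sum_congr rfl fun k _ => by ring
    rw [hexp, integral_finset_sum _ (fun k _ => (hInt_fk k).mul_const (w k))] at hchg
    have hterm : ∀ k : Fin n,
        (∫ θ, (ℓ ‖(θ : EuclideanSpace ℝ (Fin n)) - e₁‖ *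
            (θ : EuclideanSpace ℝ (Fin n)) k) * w k ∂μ)
          = (∫ θ, ℓ ‖(θ : EuclideanSpace ℝ (Fin n)) - e₁‖ *
            (θ : EuclideanSpace ℝ (Fin n)) k ∂μ) * w k := by
      intro k; rw [integral_mul_const]
    rw [Finset.sum_congr rfl fun k _ => hterm k, Finset.sum_eq_single i0] at hchg
    · rw [← hν₁, hw0] at hchg
      exact hchg.symm
    · intro k _ hk
      rw [hJ k hk, zero_mul]
    · intro h; exact absurd (Finset.mem_univ i0) h
  constructor
  · intro j η
    have hls : (fun θ : sphere (0 : EuclideanSpace ℝ (Fin n)) 1 =>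
        ℓ ‖(η : EuclideanSpace ℝ (Fin n)) - (θ : EuclideanSpace ℝ (Fin n))‖ *
          (n * (θ : EuclideanSpace ℝ (Fin n)) j / absS))
        = (fun θ : sphere (0 : EuclideanSpace ℝ (Fin n)) 1 =>
            (n / absS) * (ℓ ‖(η : EuclideanSpace ℝ (Fin n)) -
              (θ : EuclideanSpace ℝ (Fin n))‖ * (θ : EuclideanSpace ℝ (Fin n)) j)) := by
      funext θ; ring
    rw [hls, integral_const_mul, key j η]
    ring
  · intro hcon
    by_contra habs
    push_neg at habs
    set σ : ℝ := if 0 ≤ ν₁ then 1 else -1 with hσ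
    have hσ1 : σ * σ = 1 := by rw [hσ]; split <;> norm_num
    have hσν : σ * ν₁ = |ν₁| := by
      rw [hσ]
      split
      · next h => rw [abs_of_nonneg h, one_mul]
      · next h => rw [abs_of_neg (lt_of_not_ge h)]; ring
    have hinner_e₁ : ∀ x : EuclideanSpace ℝ (Fin n), ⟪x, e₁⟫ = x i0 := by
      intro x
      rw [he₁, EuclideanSpace.inner_single_right]; simp
    have hθ0le : ∀ θ : sphere (0 : EuclideanSpace ℝ (Fin n)) 1,
        σ * (θ : EuclideanSpace ℝ (Fin n)) i0 ≤ 1 := by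
      intro θ
      have h1 : |(θ : EuclideanSpace ℝ (Fin n)) i0| ≤ 1 := by
        rw [← hinner_e₁ (θ : EuclideanSpace ℝ (Fin n))]
        calc |⟪(θ : EuclideanSpace ℝ (Fin n)), e₁⟫|
            ≤ ‖(θ : EuclideanSpace ℝ (Fin n))‖ * ‖e₁‖ := abs_real_inner_le_norm _ _
          _ = 1 := by rw [norm_coe_sphere, he₁norm]; norm_num
      have hσabs : |σ| = 1 := by rw [hσ]; split <;> norm_num
      calc σ * (θ : EuclideanSpace ℝ (Fin n)) i0
          ≤ |σ * (θ : EuclideanSpace ℝ (Fin n)) i0| := le_abs_self _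
        _ = |σ| * |(θ : EuclideanSpace ℝ (Fin n)) i0| := abs_mul _ _
        _ ≤ 1 * 1 := by rw [hσabs]; exact mul_le_mul_of_nonneg_left h1 zero_le_one
        _ = 1 := by norm_num
    have hf0 : ∀ θ : sphere (0 : EuclideanSpace ℝ (Fin n)) 1,
        0 ≤ ℓ ‖(θ : EuclideanSpace ℝ (Fin n)) - e₁‖ := by
      intro θ
      refine hℓ0 _ ?_
      have := norm_sub_mem_Icc e₁ he₁norm θ
      rwa [norm_sub_rev] at this
    have hg0 : ∀ θ : sphere (0 : EuclideanSpace ℝ (Fin n)) 1,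
        0 ≤ ℓ ‖(θ : EuclideanSpace ℝ (Fin n)) - e₁‖ *
          (1 - σ * (θ : EuclideanSpace ℝ (Fin n)) i0) :=
      fun θ => mul_nonneg (hf0 θ) (by linarith [hθ0le θ])
    have hIg : Integrable (fun θ : sphere (0 : EuclideanSpace ℝ (Fin n)) 1 =>
        ℓ ‖(θ : EuclideanSpace ℝ (Fin n)) - e₁‖ *
          (1 - σ * (θ : EuclideanSpace ℝ (Fin n)) i0)) μ :=
      integrable_cont ((contB e₁ he₁norm).mul
        (continuous_const.sub (continuous_const.mul (cont_coord i0))))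
    have hgint : (∫ θ, ℓ ‖(θ : EuclideanSpace ℝ (Fin n)) - e₁‖ *
        (1 - σ * (θ : EuclideanSpace ℝ (Fin n)) i0) ∂μ) = 1 - σ * ν₁ := by
      have hsplit : (fun θ : sphere (0 : EuclideanSpace ℝ (Fin n)) 1 =>
          ℓ ‖(θ : EuclideanSpace ℝ (Fin n)) - e₁‖ *
            (1 - σ * (θ : EuclideanSpace ℝ (Fin n)) i0))
          = (fun θ : sphere (0 : EuclideanSpace ℝ (Fin n)) 1 =>
              ℓ ‖(θ : EuclideanSpace ℝ (Fin n)) - e₁‖ -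
                σ * (ℓ ‖(θ : EuclideanSpace ℝ (Fin n)) - e₁‖ *
                  (θ : EuclideanSpace ℝ (Fin n)) i0)) := by
        funext θ; ring
      rw [hsplit, integral_sub hInt_f ((hInt_fk i0).const_mul σ),
        integral_const_mul, hnorm, ← hν₁]
    have h2 : 0 ≤ ∫ θ, ℓ ‖(θ : EuclideanSpace ℝ (Fin n)) - e₁‖ *
        (1 - σ * (θ : EuclideanSpace ℝ (Fin n)) i0) ∂μ :=
      integral_nonneg hg0
    have hz : (∫ θ, ℓ ‖(θ : EuclideanSpace ℝ (Fin n)) - e₁‖ *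
        (1 - σ * (θ : EuclideanSpace ℝ (Fin n)) i0) ∂μ) = 0 := by
      rw [hgint] at h2 ⊢
      linarith [hσν, habs]
    have hae := (integral_eq_zero_iff_of_nonneg hg0 hIg).mp hz
    have hpmem : σ • e₁ ∈ sphere (0 : EuclideanSpace ℝ (Fin n)) 1 := by
      rw [mem_sphere_zero_iff_norm, norm_smul, he₁norm]
      rw [hσ]; split <;> norm_num
    refine hcon ⟨⟨σ • e₁, hpmem⟩, ?_⟩
    filter_upwards [hae] with θ hθ hfne
    have hθ' : ℓ ‖(θ : EuclideanSpace ℝ (Fin n)) - e₁‖ *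
        (1 - σ * (θ : EuclideanSpace ℝ (Fin n)) i0) = 0 := hθ
    have h3 : 1 - σ * (θ : EuclideanSpace ℝ (Fin n)) i0 = 0 := by
      rcases mul_eq_zero.mp hθ' with h | h
      · exact absurd h hfne
      · exact h
    have hθ0 : (θ : EuclideanSpace ℝ (Fin n)) i0 = σ := by
      have h4 : σ * (θ : EuclideanSpace ℝ (Fin n)) i0 = 1 := by linarith
      calc (θ : EuclideanSpace ℝ (Fin n)) i0
          = (σ * σ) * (θ : EuclideanSpace ℝ (Fin n)) i0 := by rw [hσ1, one_mul]
        _ = σ * (σ * (θ : EuclideanSpace ℝ (Fin n)) i0) := by ring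
        _ = σ := by rw [h4, mul_one]
    apply Subtype.ext
    have hσn : ‖σ‖ = 1 := by rw [hσ]; split <;> simp
    have hn2 : ‖(θ : EuclideanSpace ℝ (Fin n)) - σ • e₁‖ ^ 2 = 0 := by
      rw [norm_sub_sq_real, real_inner_smul_right, hinner_e₁, hθ0, norm_coe_sphere,
        norm_smul, he₁norm, hσn]
      nlinarith [hσ1]
    have hz2 : (θ : EuclideanSpace ℝ (Fin n)) - σ • e₁ = 0 :=
      norm_eq_zero.mp (pow_eq_zero_iff (n := 2) (by norm_num) |>.mp hn2)
    exact sub_eq_zero.mp hz2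
end
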